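/- Let γ ∈ (0, π/2) and β > tan(γ). Then there exists a unique c > 0 such that tanh(βc) = c·tan(γ). (Equivalently, e^{2cβ} = (1 + c·tanγ)/(1 - c·tanγ) has a unique positive solution c.) -/

import Mathlib

open Real Set

private lemma hasDerivAt_tanh (x : ℝ) :
    HasDerivAt Real.tanh (1 / Real.cosh x ^ 2) x := by
  have h := (Real.hasDerivAt_sinh x).div (Real.hasDerivAt_cosh x) (Real.cosh_pos x).ne'
  have he : (fun y => Real.sinh y / Real.cosh y) = Real.tanh := by
    funext y; rw [Real.tanh_eq_sinh_div_cosh]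
  rw [show (Real.sinh / Real.cosh) = Real.tanh from he] at h
  refine h.congr_deriv ?_
  have := Real.cosh_sq_sub_sinh_sq x
  field_simp
  nlinarith [Real.cosh_pos x]

private lemma continuous_tanh : Continuous Real.tanh := by
  have he : (fun y => Real.sinh y / Real.cosh y) = Real.tanh := by
    funext y; rw [Real.tanh_eq_sinh_div_cosh]
  rw [← he]
  exact Real.continuous_sinh.div Real.continuous_cosh fun x => (Real.cosh_pos x).ne'

private lemma tanh_lt_one (x : ℝ) : Real.tanh x < 1 := by
  rw [Real.tanh_eq_sinh_div_cosh, div_lt_one (Real.cosh_pos x)]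
  exact Real.sinh_lt_cosh x

/-- For γ ∈ (0, π/2) and β > tanγ, the equation tanh(βc) = c·tanγ has a unique
positive solution c. -/
theorem unique_positive_root_tanh (γ β : ℝ)
    (hγ : γ ∈ Set.Ioo 0 (Real.pi / 2)) (hβ : Real.tan γ < β) :
    ∃! c : ℝ, 0 < c ∧ Real.tanh (β * c) = c * Real.tan γ := by
  set t : ℝ := Real.tan γ with ht_def
  have ht : 0 < t := Real.tan_pos_of_pos_of_lt_pi_div_two hγ.1 hγ.2
  have hβ0 : 0 < β := ht.trans hβ
  set f : ℝ → ℝ := fun c => Real.tanh (β * c) - c * t with hf_def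
  have hfc : Continuous f :=
    (continuous_tanh.comp (continuous_const.mul continuous_id)).sub
      (continuous_id.mul continuous_const)
  have hfd : ∀ c, HasDerivAt f (β * (1 / Real.cosh (β * c) ^ 2) - t) c := by
    intro c
    have hlin : HasDerivAt (fun y : ℝ => β * y) β c := by
      simpa using (hasDerivAt_id c).const_mul β
    have h1 : HasDerivAt (fun c => Real.tanh (β * c)) (1 / Real.cosh (β * c) ^ 2 * β) c :=
      (hasDerivAt_tanh (β * c)).comp c hlin
    have h2 : HasDerivAt (fun c : ℝ => c * t) t c := by
      simpa using (hasDerivAt_id c).mul_const t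
    have := h1.sub h2
    refine this.congr_deriv ?_
    ring
  have hderiv : deriv f = fun c => β * (1 / Real.cosh (β * c) ^ 2) - t :=
    funext fun c => (hfd c).deriv
  -- strict concavity on [0, ∞)
  have hconc : StrictConcaveOn ℝ (Ici (0 : ℝ)) f := by
    apply StrictAntiOn.strictConcaveOn_of_deriv (convex_Ici 0) hfc.continuousOn
    rw [hderiv, interior_Ici]
    intro x hx y hy hxy
    simp only [mem_Ioi] at hx hy
    have hc : Real.cosh (β * x) < Real.cosh (β * y) := by
      rw [Real.cosh_lt_cosh]
      rw [abs_of_pos (by positivity), abs_of_pos (by positivity)]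
      exact (mul_lt_mul_iff_right₀ hβ0).mpr hxy
    have hcx : 0 < Real.cosh (β * x) := Real.cosh_pos _
    have h2 : Real.cosh (β * x) ^ 2 < Real.cosh (β * y) ^ 2 := by nlinarith
    have : 1 / Real.cosh (β * y) ^ 2 < 1 / Real.cosh (β * x) ^ 2 := by
      apply one_div_lt_one_div_of_lt (by positivity) h2
    have := (mul_lt_mul_iff_right₀ hβ0).mpr this
    linarith
  have hf0 : f 0 = 0 := by simp [hf_def]
  -- find δ > 0 with f δ > 0
  obtain ⟨δ, hδ0, hfδ⟩ : ∃ δ : ℝ, 0 < δ ∧ 0 < f δ := by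
    set r : ℝ := β / t with hr
    have hr1 : 1 < r := (one_lt_div ht).mpr hβ
    have hlr : 0 < Real.log r := Real.log_pos hr1
    refine ⟨Real.log r / (4 * β), by positivity, ?_⟩
    set δ : ℝ := Real.log r / (4 * β) with hδ
    have hδpos : 0 < δ := by positivity
    -- deriv f is positive on Ioo 0 δ
    have hderiv_pos : ∀ x ∈ Ioo (0 : ℝ) δ, 0 < deriv f x := by
      intro x hx
      rw [hderiv]
      have hxδ : β * x < β * δ := (mul_lt_mul_iff_right₀ hβ0).mpr hx.2
      have hbd : Real.cosh (β * x) ≤ Real.exp (β * x) := by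
        rw [Real.cosh_eq]
        have : Real.exp (-(β * x)) ≤ Real.exp (β * x) :=
          Real.exp_le_exp.mpr (by nlinarith [hx.1])
        linarith
      have hbd2 : Real.cosh (β * x) ^ 2 ≤ Real.exp (β * x) ^ 2 := by
        have := (Real.cosh_pos (β * x)).le
        nlinarith
      have hexp2 : Real.exp (β * x) ^ 2 = Real.exp (2 * (β * x)) := by
        rw [sq, ← Real.exp_add]; ring_nf
      have hlt : 2 * (β * x) < Real.log r := by
        have : β * x < β * δ := hxδ
        have : β * δ = Real.log r / 4 := by
          rw [hδ]; field_simp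
        nlinarith
      have hcr : Real.cosh (β * x) ^ 2 < r := by
        calc Real.cosh (β * x) ^ 2 ≤ Real.exp (2 * (β * x)) := by rw [← hexp2]; exact hbd2
          _ < Real.exp (Real.log r) := Real.exp_lt_exp.mpr hlt
          _ = r := Real.exp_log (by positivity)
      have hcp : 0 < Real.cosh (β * x) ^ 2 := by positivity
      have : t < β / Real.cosh (β * x) ^ 2 := by
        rw [lt_div_iff₀ hcp]
        calc t * Real.cosh (β * x) ^ 2 < t * r := by nlinarith
          _ = β := by rw [hr]; field_simp
      show 0 < β * (1 / Real.cosh (β * x) ^ 2) - t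
      have hrw : β * (1 / Real.cosh (β * x) ^ 2) = β / Real.cosh (β * x) ^ 2 := by ring
      rw [hrw]; linarith
    have hmono : StrictMonoOn f (Icc 0 δ) :=
      strictMonoOn_of_deriv_pos (convex_Icc 0 δ) hfc.continuousOn
        (by rwa [interior_Icc])
    have := hmono (left_mem_Icc.mpr hδpos.le) (right_mem_Icc.mpr hδpos.le) hδpos
    rwa [hf0] at this
  -- f is negative at M = δ + 2/t
  set M : ℝ := δ + 2 / t with hM
  have hδM : δ < M := by
    have : 0 < 2 / t := by positivity
    rw [hM]; linarith
  have hfM : f M < 0 := by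
    have h1 : Real.tanh (β * M) < 1 := Real.tanh_lt_one _
    have h2 : (2 : ℝ) ≤ M * t := by
      have h2t : 2 / t * t = 2 := div_mul_cancel₀ 2 ht.ne'
      rw [hM]; nlinarith
    simp only [hf_def]; linarith
  -- IVT
  obtain ⟨c, hcmem, hfc0⟩ : ∃ c ∈ Icc δ M, f c = 0 := by
    have hsub := intermediate_value_Icc' hδM.le hfc.continuousOn
    have h0mem : (0 : ℝ) ∈ Icc (f M) (f δ) := ⟨hfM.le, hfδ.le⟩
    obtain ⟨c, hc, hc0⟩ := hsub h0mem
    exact ⟨c, hc, hc0⟩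
  have hcpos : 0 < c := lt_of_lt_of_le hδ0 hcmem.1
  refine ⟨c, ⟨hcpos, by simpa [hf_def, sub_eq_zero] using hfc0⟩, ?_⟩
  -- uniqueness
  rintro d ⟨hdpos, hd⟩
  have hfd0 : f d = 0 := by simp [hf_def, hd]
  by_contra hne
  -- wlog via strict concavity: roots c1 < c2, with f 0 = 0, contradiction
  have key : ∀ c1 c2 : ℝ, 0 < c1 → c1 < c2 → f c1 = 0 → f c2 = 0 → False := by
    intro c1 c2 h1 h12 hfc1 hfc2
    have h2 : 0 < c2 := h1.trans h12
    set a : ℝ := 1 - c1 / c2 with ha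
    set b : ℝ := c1 / c2 with hb
    have hbpos : 0 < b := by positivity
    have hb1 : b < 1 := (div_lt_one h2).mpr h12
    have hapos : 0 < a := by simp [ha]; linarith
    have hab : a + b = 1 := by simp [ha, hb]
    have hcomb : a • (0 : ℝ) + b • c2 = c1 := by
      simp [hb, smul_eq_mul]
      field_simp
    have := hconc.2 (le_refl (0:ℝ) : (0:ℝ) ∈ Ici (0:ℝ)) (le_of_lt h2 : c2 ∈ Ici (0:ℝ))
      (by exact h2.ne) hapos hbpos hab
    rw [hcomb, hf0, hfc1, hfc2] at this
    simp at this
  rcases lt_trichotomy d c with h | h | h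
  · exact key d c hdpos h hfd0 hfc0
  · exact hne h
  · exact key c d hcpos h hfc0 hfd0
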